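/- Let F be the OFTRL response function of the log barrier regularizer, i.e., F(E) is the unique minimizer over (0,1) of x ↦ x·E − log x − log(1−x), and suppose F is L-Lipschitz for a constant L > 0. Let c1 := 1/2 − F(1/(20L)) = sqrt(1/4 + 400L²) − 20L > 0. Then there exist constants δ', c2 > 0 and c3 ∈ (0,1/2] such that for every 0 < δ ≤ δ' and every E ∈ ℝ: (1) if F(E) ≥ 1/(1+δ) then F(E − c1²/(30Lδ)) ≥ (1+c3)/(1+c3+δ); and (2) if F(E) ≥ 1/(2(1+δ)) then F(E − c3·c1²/(120L) + δ/(4L)) ≥ 1/2 + c2. -/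

import Mathlib

open Set Real

set_option maxHeartbeats 1600000 in
/-- the main assumption holds for the log barrier regularizer. Here `F E` is
the unique minimizer over `(0,1)` of `x ↦ x·E − log x − log(1−x)`, assumed `L`-Lipschitz.
Then `c1 := 1/2 − F(1/(20L)) = sqrt(1/4 + 400L²) − 20L > 0`, and there exist `δ', c2 > 0`
and `c3 ∈ (0,1/2]` making items (1) and (2) of the main assumption hold. -/
theorem logBarrier_main_assumption
    (F : ℝ → ℝ)
    (hF : ∀ E : ℝ, F E ∈ Set.Ioo (0 : ℝ) 1 ∧
      ∀ z ∈ Set.Ioo (0 : ℝ) 1, z ≠ F E →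
        F E * E + (-Real.log (F E) - Real.log (1 - F E)) <
          z * E + (-Real.log z - Real.log (1 - z)))
    (L : ℝ) (hL : 0 < L)
    (hLip : ∀ a b : ℝ, |F a - F b| ≤ L * |a - b|) :
    (1 / 2 - F (1 / (20 * L)) = Real.sqrt (1 / 4 + 400 * L ^ 2) - 20 * L) ∧
    (0 < 1 / 2 - F (1 / (20 * L))) ∧
    ∃ δ' c2 c3 : ℝ, 0 < δ' ∧ 0 < c2 ∧ c3 ∈ Set.Ioc (0 : ℝ) (1 / 2) ∧
      ∀ δ : ℝ, 0 < δ → δ ≤ δ' → ∀ E : ℝ,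
        (1 / (1 + δ) ≤ F E →
          (1 + c3) / (1 + c3 + δ) ≤
            F (E - (1 / 2 - F (1 / (20 * L))) ^ 2 / (30 * L * δ))) ∧
        (1 / (2 * (1 + δ)) ≤ F E →
          1 / 2 + c2 ≤
            F (E - c3 * (1 / 2 - F (1 / (20 * L))) ^ 2 / (120 * L) + δ / (4 * L))) := by
  -- Step 1: the first-order characterization of F.
  have hIoo : ∀ E, F E ∈ Set.Ioo (0:ℝ) 1 := fun E => (hF E).1
  have key : ∀ E : ℝ, E * (F E * (1 - F E)) = 1 - 2 * F E := by
    intro E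
    obtain ⟨⟨hx0, hx1⟩, hmin⟩ := hF E
    set s := Real.sqrt (E ^ 2 + 4) with hsdef
    have hs2 : s ^ 2 = E ^ 2 + 4 := Real.sq_sqrt (by positivity)
    have hs0 : 0 ≤ s := Real.sqrt_nonneg _
    have hsE : -E < s := by nlinarith
    have hD : (0:ℝ) < E + 2 + s := by linarith
    set g := 2 / (E + 2 + s) with hgdef
    have hg0 : 0 < g := by positivity
    have hg1 : g < 1 := by
      rw [hgdef, div_lt_one hD]; linarith
    have hquad : E * g ^ 2 - (E + 2) * g + 1 = 0 := by
      rw [hgdef]; field_simp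
      linear_combination hs2
    have hkg : E * (g * (1 - g)) = 1 - 2 * g := by linear_combination -hquad
    clear_value g
    clear hgdef
    have hFg : F E = g := by
      by_contra hne
      have H := hmin g ⟨hg0, hg1⟩ (fun h => hne h.symm)
      have h1g : (0:ℝ) < 1 - g := by linarith
      have h1x : (0:ℝ) < 1 - F E := by linarith
      have hxg1 : F E / g ≠ 1 := by
        intro h
        rw [div_eq_one_iff_eq hg0.ne'] at h
        exact hne h
      have hxg2 : (1 - F E) / (1 - g) ≠ 1 := by
        intro h
        rw [div_eq_one_iff_eq h1g.ne'] at h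
        exact hne (by linarith)
      have l1 : Real.log (F E / g) < F E / g - 1 :=
        Real.log_lt_sub_one_of_pos (by positivity) hxg1
      have l2 : Real.log ((1 - F E) / (1 - g)) < (1 - F E) / (1 - g) - 1 :=
        Real.log_lt_sub_one_of_pos (by positivity) hxg2
      rw [Real.log_div hx0.ne' hg0.ne'] at l1
      rw [Real.log_div h1x.ne' h1g.ne'] at l2
      have heq : F E / g + (1 - F E) / (1 - g) - 2 = F E * E - g * E := by
        field_simp
        linear_combination (g - F E) * hkg
      linarith
    rw [hFg]; exact hkg
  -- Step 2: monotone comparison lemmas.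
  have B : ∀ (E t : ℝ), 0 < t → t < 1 → (t ≤ F E ↔ E * (t * (1 - t)) ≤ 1 - 2 * t) := by
    intro E t ht0 ht1
    obtain ⟨hx0, hx1⟩ := hIoo E
    have hk := key E
    have hxx : 0 < F E * (1 - F E) := by nlinarith
    have h4 : E * (t * (1 - t)) * (F E * (1 - F E)) = (1 - 2 * F E) * (t * (1 - t)) := by
      linear_combination (t * (1 - t)) * hk
    constructor
    · intro h
      have h5 : (1 - 2 * F E) * (t * (1 - t)) ≤ (1 - 2 * t) * (F E * (1 - F E)) := by
        nlinarith [mul_nonneg (sub_nonneg.2 h)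
          (show (0:ℝ) ≤ (1 - F E) * (1 - t) + F E * t by nlinarith)]
      have h6 : E * (t * (1 - t)) * (F E * (1 - F E)) ≤ (1 - 2 * t) * (F E * (1 - F E)) := by
        linarith
      exact le_of_mul_le_mul_right h6 hxx
    · intro h
      by_contra hc
      push_neg at hc
      have h5 : (1 - 2 * t) * (F E * (1 - F E)) < (1 - 2 * F E) * (t * (1 - t)) := by
        nlinarith [mul_pos (sub_pos.2 hc)
          (show (0:ℝ) < (1 - F E) * (1 - t) + F E * t by nlinarith)]
      have h6 : E * (t * (1 - t)) * (F E * (1 - F E)) ≤ (1 - 2 * t) * (F E * (1 - F E)) :=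
        mul_le_mul_of_nonneg_right h hxx.le
      linarith
  have B2 : ∀ (E t : ℝ), 0 < t → t < 1 → (F E ≤ t ↔ 1 - 2 * t ≤ E * (t * (1 - t))) := by
    intro E t ht0 ht1
    obtain ⟨hx0, hx1⟩ := hIoo E
    have hk := key E
    have hxx : 0 < F E * (1 - F E) := by nlinarith
    have h4 : E * (t * (1 - t)) * (F E * (1 - F E)) = (1 - 2 * F E) * (t * (1 - t)) := by
      linear_combination (t * (1 - t)) * hk
    constructor
    · intro h
      have h5 : (1 - 2 * t) * (F E * (1 - F E)) ≤ (1 - 2 * F E) * (t * (1 - t)) := by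
        nlinarith [mul_nonneg (sub_nonneg.2 h)
          (show (0:ℝ) ≤ (1 - F E) * (1 - t) + F E * t by nlinarith)]
      have h6 : (1 - 2 * t) * (F E * (1 - F E)) ≤ E * (t * (1 - t)) * (F E * (1 - F E)) := by
        linarith
      exact le_of_mul_le_mul_right h6 hxx
    · intro h
      by_contra hc
      push_neg at hc
      have h5 : (1 - 2 * F E) * (t * (1 - t)) < (1 - 2 * t) * (F E * (1 - F E)) := by
        nlinarith [mul_pos (sub_pos.2 hc)
          (show (0:ℝ) < (1 - F E) * (1 - t) + F E * t by nlinarith)]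
      have h6 : (1 - 2 * t) * (F E * (1 - F E)) ≤ E * (t * (1 - t)) * (F E * (1 - F E)) :=
        mul_le_mul_of_nonneg_right h hxx.le
      linarith
  -- Step 3: compute F (1/(20 L)).
  set s := Real.sqrt (1 / 4 + 400 * L ^ 2) with hsdef
  have hs2 : s ^ 2 = 1 / 4 + 400 * L ^ 2 := Real.sq_sqrt (by positivity)
  have hs0 : 0 ≤ s := Real.sqrt_nonneg _
  clear_value s
  have hsgt : 20 * L < s := by nlinarith
  have hslt : s < 1 / 2 + 20 * L := by nlinarith
  obtain ⟨x0, hx0def⟩ : ∃ x0 : ℝ, x0 = 1 / 2 + 20 * L - s := ⟨_, rfl⟩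
  have hx00 : 0 < x0 := by rw [hx0def]; linarith
  have hx01 : x0 < 1 := by rw [hx0def]; linarith
  have hk0 : (1 / (20 * L)) * (x0 * (1 - x0)) = 1 - 2 * x0 := by
    rw [hx0def]; field_simp
    linear_combination -4*hs2
  have hFx0 : F (1 / (20 * L)) = x0 :=
    le_antisymm ((B2 _ _ hx00 hx01).mpr hk0.ge) ((B _ _ hx00 hx01).mpr hk0.le)
  have hc1 : 1 / 2 - F (1 / (20 * L)) = s - 20 * L := by
    rw [hFx0, hx0def]; ring
  have hc1pos : 0 < s - 20 * L := by linarith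
  refine ⟨hc1, by rw [hc1]; linarith, ?_⟩
  -- Step 4: choose the constants.
  obtain ⟨m, hmdef⟩ : ∃ m : ℝ, m = min (1/2) ((s - 20*L)^2 / (60*L)) := ⟨_, rfl⟩
  have hm0 : 0 < m := by rw [hmdef]; exact lt_min (by norm_num) (by positivity)
  have hm12 : m ≤ 1/2 := by rw [hmdef]; exact min_le_left _ _
  have hm60 : m ≤ (s - 20*L)^2 / (60*L) := by rw [hmdef]; exact min_le_right _ _
  obtain ⟨K, hKdef⟩ : ∃ K : ℝ, K = m * (s - 20*L)^2 / (120*L) := ⟨_, rfl⟩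
  have hKpos : 0 < K := by rw [hKdef]; positivity
  obtain ⟨c2, hc2def⟩ : ∃ c2 : ℝ, c2 = min (1/8) (K/24) := ⟨_, rfl⟩
  have hc2pos : 0 < c2 := by rw [hc2def]; exact lt_min (by norm_num) (by positivity)
  have hc2a : c2 ≤ 1/8 := by rw [hc2def]; exact min_le_left _ _
  have hc2b : c2 ≤ K/24 := by rw [hc2def]; exact min_le_right _ _
  obtain ⟨δ', hδ'def⟩ : ∃ δ' : ℝ, δ' = min 1 (K / (8 + 1/(2*L))) := ⟨_, rfl⟩
  have hδ'pos : 0 < δ' := by rw [hδ'def]; exact lt_min (by norm_num) (by positivity)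
  have hδ'1 : δ' ≤ 1 := by rw [hδ'def]; exact min_le_left _ _
  have hδ'K : δ' ≤ K / (8 + 1/(2*L)) := by rw [hδ'def]; exact min_le_right _ _
  refine ⟨δ', c2, m, hδ'pos, hc2pos, ⟨hm0, hm12⟩, ?_⟩
  intro δ hδ0 hδδ' E
  have hδ1 : δ ≤ 1 := hδδ'.trans hδ'1
  constructor
  -- Item (1)
  · intro hyp
    have ht'0 : 0 < 1 / (1 + δ) := by positivity
    have ht'1 : 1 / (1 + δ) < 1 := by
      rw [div_lt_one (by linarith)]; linarith
    have hE' := (B E _ ht'0 ht'1).mp hyp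
    have hEδ : E * δ ≤ δ ^ 2 - 1 := by
      have h1 : 1 / (1 + δ) * (1 - 1 / (1 + δ)) = δ / (1 + δ) ^ 2 := by
        have hne : (1:ℝ) + δ ≠ 0 := by positivity
        have h2' : 1 - 1 / (1 + δ) = δ / (1 + δ) := by field_simp; ring
        rw [h2', div_mul_div_comm, one_mul, sq]
      have h2 : 1 - 2 * (1 / (1 + δ)) = (δ - 1) / (1 + δ) := by
        have hne : (1:ℝ) + δ ≠ 0 := by positivity
        field_simp; ring
      rw [h1, h2, ← mul_div_assoc] at hE'
      have h3 := (div_le_div_iff₀ (by positivity) (by positivity)).mp hE'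
      have h4 : (E * δ) * (1 + δ) ≤ (δ ^ 2 - 1) * (1 + δ) := by linarith only [h3]
      exact le_of_mul_le_mul_right h4 (by linarith)
    rw [hc1]
    have ht0 : 0 < (1 + m) / (1 + m + δ) := by positivity
    have ht1 : (1 + m) / (1 + m + δ) < 1 := by
      rw [div_lt_one (by linarith)]; linarith
    refine (B _ _ ht0 ht1).mpr ?_
    have h1 : (1 + m) / (1 + m + δ) * (1 - (1 + m) / (1 + m + δ))
        = (1 + m) * δ / (1 + m + δ) ^ 2 := by
      field_simp; ring
    have h2 : 1 - 2 * ((1 + m) / (1 + m + δ)) = (δ - 1 - m) / (1 + m + δ) := by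
      field_simp; ring
    rw [h1, h2, ← mul_div_assoc, div_le_div_iff₀ (by positivity) (by positivity)]
    have hc : (s - 20*L)^2 / (30*L*δ) * δ = (s - 20*L)^2 / (30*L) := by
      field_simp
    have key30 : 2 * m ≤ (s - 20*L)^2 / (30*L) := by
      have he : (s - 20*L)^2 / (30*L) = 2 * ((s - 20*L)^2 / (60*L)) := by ring
      rw [he]; linarith
    have hC0 : 0 ≤ (s - 20*L)^2 / (30*L) := by positivity
    calc (E - (s - 20*L)^2 / (30*L*δ)) * ((1 + m) * δ) * (1 + m + δ)
        = (E * δ - (s - 20*L)^2 / (30*L*δ) * δ) * ((1 + m) * (1 + m + δ)) := by ring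
      _ = (E * δ - (s - 20*L)^2 / (30*L)) * ((1 + m) * (1 + m + δ)) := by rw [hc]
      _ ≤ (δ^2 - 1 - (s - 20*L)^2 / (30*L)) * ((1 + m) * (1 + m + δ)) := by
          apply mul_le_mul_of_nonneg_right (by linarith only [hEδ])
            (mul_nonneg (by linarith) (by linarith))
      _ ≤ (δ - 1 - m) * (1 + m + δ) ^ 2 := by
          have hδsq : δ^2 ≤ 1 := by nlinarith only [hδ0, hδ1]
          have p1 : (0:ℝ) ≤ m * (1 - δ^2) := mul_nonneg hm0.le (by linarith)
          have p2 : (0:ℝ) ≤ (1 + m) * ((s - 20*L)^2 / (30*L) - 2*m) :=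
            mul_nonneg (by linarith) (by linarith)
          have hA2 : (0:ℝ) ≤ m * (1 - δ^2) + m^2 + (1 + m) * ((s - 20*L)^2 / (30*L) - 2*m) := by
            linarith only [p1, p2, sq_nonneg m]
          have hA : (0:ℝ) ≤ (1 + m + δ) * (m * (1 - δ^2) + m^2 + (1 + m) * ((s - 20*L)^2 / (30*L) - 2*m)) :=
            mul_nonneg (by linarith) hA2
          linarith only [hA]
  -- Item (2)
  · intro hyp
    have ht'0 : 0 < 1 / (2 * (1 + δ)) := by positivity
    have ht'1 : 1 / (2 * (1 + δ)) < 1 := by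
      rw [div_lt_one (by linarith)]; linarith
    have hE' := (B E _ ht'0 ht'1).mp hyp
    have hE4 : E * (1 + 2*δ) ≤ 4*δ*(1+δ) := by
      have h1 : 1 / (2*(1+δ)) * (1 - 1 / (2*(1+δ))) = (1 + 2*δ) / (2*(1+δ))^2 := by
        field_simp; ring
      have h2 : 1 - 2 * (1 / (2*(1+δ))) = δ / (1+δ) := by
        have hne : (1:ℝ) + δ ≠ 0 := by positivity
        field_simp; ring
      rw [h1, h2, ← mul_div_assoc] at hE'
      have h3 := (div_le_div_iff₀ (by positivity) (by positivity)).mp hE'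
      have h4 : (E * (1 + 2*δ)) * (1 + δ) ≤ (4*δ*(1+δ)) * (1 + δ) := by linarith only [h3]
      exact le_of_mul_le_mul_right h4 (by linarith)
    have hEle : E ≤ 4*δ := by
      have h4 : E * (1 + 2*δ) ≤ (4*δ) * (1 + 2*δ) := by
        linarith only [hE4, sq_nonneg δ]
      exact le_of_mul_le_mul_right h4 (by linarith)
    rw [hc1]
    have ht0 : 0 < 1/2 + c2 := by linarith
    have ht1 : 1/2 + c2 < 1 := by linarith
    refine (B _ _ ht0 ht1).mpr ?_
    have h1 : (1/2 + c2) * (1 - (1/2 + c2)) = 1/4 - c2^2 := by ring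
    have h2 : 1 - 2 * (1/2 + c2) = -(2*c2) := by ring
    rw [h1, h2]
    have hKeq : m * (s - 20*L)^2 / (120*L) = K := by rw [hKdef]
    have hδ'2 : δ * (8 + 1/(2*L)) ≤ K := by
      have h6 : (0:ℝ) < 8 + 1/(2*L) := by positivity
      have h5 := mul_le_mul_of_nonneg_right (hδδ'.trans hδ'K) h6.le
      rw [div_mul_cancel₀ _ h6.ne'] at h5
      exact h5
    have hE2 : E - m * (s - 20*L)^2 / (120*L) + δ / (4*L) ≤ -(K/2) := by
      rw [hKeq]
      have hd : δ / (4*L) = (δ * (8 + 1/(2*L))) / 2 - 4*δ := by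
        field_simp; ring
      rw [hd]
      linarith only [hEle, hδ'2]
    have hq0 : 0 < 1/4 - c2^2 := by nlinarith only [hc2a, hc2pos]
    have h7 := mul_le_mul_of_nonneg_right hE2 hq0.le
    have p1 : (0:ℝ) ≤ (K - 24*c2) * (1/8 - c2/16) :=
      mul_nonneg (by linarith) (by linarith)
    have p2 : (0:ℝ) ≤ K * (c2 * (1/8 - c2)) :=
      mul_nonneg hKpos.le (mul_nonneg hc2pos.le (by linarith))
    have p3 : (0:ℝ) ≤ c2 * (1 - 1.5*c2) :=
      mul_nonneg hc2pos.le (by linarith)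
    linarith only [h7, p1, p2, p3]
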